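/- For any p ∈ ℝ³ and m ≥ 0 with E_p = √(|p|² + m²), the 2×2 block operator matrix [[√((E_p+m)/(2E_p)), -√((E_p-m)/(2E_p))·(p·γ)γ⁰/|p|], [√((E_p-m)/(2E_p))·(p·γ)γ⁰/|p|, √((E_p+m)/(2E_p))]] (entries being 4×4 real matrices in a Majorana basis, with p ≠ 0) is an orthogonal 8×8 real matrix. -/

import Mathlib

open Matrix

theorem stmt_8 (A : Fin 4 → Matrix (Fin 4) (Fin 4) ℝ)
    (hcl : ∀ μ ν, A μ * A ν + A ν * A μ =
      (-2 * Matrix.diagonal ![(1 : ℝ), -1, -1, -1] μ ν) • (1 : Matrix (Fin 4) (Fin 4) ℝ))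
    (horth : ∀ μ, (A μ)ᵀ * A μ = 1)
    (p : Fin 3 → ℝ) (hp : p ≠ 0) (m : ℝ) (hm : 0 ≤ m)
    (np Ep a b : ℝ)
    (hnp : np = Real.sqrt (∑ i, p i ^ 2))
    (hEp : Ep = Real.sqrt (np ^ 2 + m ^ 2))
    (ha : a = Real.sqrt ((Ep + m) / (2 * Ep)))
    (hb : b = Real.sqrt ((Ep - m) / (2 * Ep)))
    (C : Matrix (Fin 4) (Fin 4) ℝ)
    -- `C = (p·γ)γ⁰ = -(Σ pₖ iγᵏ)(iγ⁰)` as a real matrix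
    (hC : C = -((∑ i : Fin 3, p i • A i.succ) * A 0)) :
    (Matrix.fromBlocks (a • 1) (-((b / np) • C)) ((b / np) • C) (a • 1))ᵀ *
      Matrix.fromBlocks (a • 1) (-((b / np) • C)) ((b / np) • C) (a • 1) = 1 := by
  have half : ∀ X Y : Matrix (Fin 4) (Fin 4) ℝ, X + X = Y + Y → X = Y := by
    intro X Y h
    have h1 : (2:ℝ) • X = (2:ℝ) • Y := by rw [two_smul, two_smul]; exact h
    have h2 := congrArg (fun Z => (2⁻¹:ℝ) • Z) h1
    simp only [smul_smul] at h2
    norm_num at h2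
    exact h2
  have hA0sq : A 0 * A 0 = -1 := by
    have d00 : Matrix.diagonal ![(1:ℝ), -1, -1, -1] 0 0 = 1 := by simp
    have h := hcl 0 0
    rw [d00] at h
    exact half _ _ (by rw [h]; module)
  have hanti : ∀ i j : Fin 3, A i.succ * A j.succ + A j.succ * A i.succ
      = (if i = j then (2:ℝ) else 0) • (1 : Matrix (Fin 4) (Fin 4) ℝ) := by
    intro i j
    have hd : Matrix.diagonal ![(1:ℝ), -1, -1, -1] i.succ j.succ = if i = j then -1 else 0 := by
      by_cases hij : i = j
      · subst hij
        rw [if_pos rfl, Matrix.diagonal_apply_eq]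
        fin_cases i <;> norm_num <;> rfl
      · rw [if_neg hij, Matrix.diagonal_apply_ne]
        exact fun h => hij (Fin.succ_injective _ h)
    have h := hcl i.succ j.succ
    rw [hd] at h
    by_cases hij : i = j
    · rw [if_pos hij] at h
      rw [if_pos hij, h]
      norm_num
    · rw [if_neg hij] at h
      rw [if_neg hij, h]
      norm_num
  have hAisq : ∀ i : Fin 3, A i.succ * A i.succ = 1 := by
    intro i
    have h := hanti i i
    rw [if_pos rfl] at h
    exact half _ _ (by rw [h]; module)
  have hanti0 : ∀ i : Fin 3, A i.succ * A 0 = -(A 0 * A i.succ) := by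
    intro i
    have h := hcl i.succ 0
    rw [Matrix.diagonal_apply_ne _ (Fin.succ_ne_zero i), mul_zero, zero_smul] at h
    exact eq_neg_of_add_eq_zero_left h
  have hA0T : (A 0)ᵀ = -(A 0) := by
    have h1 : A 0 * (-(A 0)) = 1 := by rw [mul_neg, hA0sq, neg_neg]
    calc (A 0)ᵀ = (A 0)ᵀ * (A 0 * -(A 0)) := by rw [h1, mul_one]
      _ = ((A 0)ᵀ * A 0) * -(A 0) := by rw [mul_assoc]
      _ = -(A 0) := by rw [horth 0, one_mul]
  have hAiT : ∀ i : Fin 3, (A i.succ)ᵀ = A i.succ := by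
    intro i
    calc (A i.succ)ᵀ = (A i.succ)ᵀ * (A i.succ * A i.succ) := by rw [hAisq i, mul_one]
      _ = ((A i.succ)ᵀ * A i.succ) * A i.succ := by rw [mul_assoc]
      _ = A i.succ := by rw [horth _, one_mul]
  set S : Matrix (Fin 4) (Fin 4) ℝ := ∑ i : Fin 3, p i • A i.succ with hS
  have hST : Sᵀ = S := by
    rw [hS, Matrix.transpose_sum]
    exact Finset.sum_congr rfl fun i _ => by rw [Matrix.transpose_smul, hAiT]
  have hSA0 : S * A 0 = -(A 0 * S) := by
    rw [hS, Finset.sum_mul, Finset.mul_sum, ← Finset.sum_neg_distrib]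
    exact Finset.sum_congr rfl fun i _ => by
      rw [smul_mul_assoc, hanti0 i, mul_smul_comm, smul_neg]
  have hsum_sq : (0:ℝ) < ∑ i, p i ^ 2 := by
    rcases Function.ne_iff.mp hp with ⟨i, hi⟩
    have habs := abs_pos.mpr hi
    have hsq : (0:ℝ) < p i ^ 2 := by nlinarith [sq_abs (p i)]
    exact hsq.trans_le (Finset.single_le_sum (fun j _ => sq_nonneg (p j)) (Finset.mem_univ i))
  have hnp2 : np ^ 2 = ∑ i, p i ^ 2 := by rw [hnp, Real.sq_sqrt hsum_sq.le]
  have expand : S * S = ∑ i : Fin 3, ∑ j : Fin 3, (p i * p j) • (A i.succ * A j.succ) := by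
    rw [hS, Finset.sum_mul]
    refine Finset.sum_congr rfl fun i _ => ?_
    rw [Finset.mul_sum]
    exact Finset.sum_congr rfl fun j _ => by
      rw [smul_mul_assoc, mul_smul_comm, smul_smul]
  have expand2 : S * S = ∑ i : Fin 3, ∑ j : Fin 3, (p i * p j) • (A j.succ * A i.succ) := by
    rw [expand, Finset.sum_comm]
    exact Finset.sum_congr rfl fun i _ => Finset.sum_congr rfl fun j _ => by rw [mul_comm]
  have hSS : S * S = (np ^ 2) • (1 : Matrix (Fin 4) (Fin 4) ℝ) := by
    have inner : ∀ i : Fin 3,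
        ((∑ j : Fin 3, (p i * p j) • (A i.succ * A j.succ)) +
          ∑ j : Fin 3, (p i * p j) • (A j.succ * A i.succ))
        = (2 * p i ^ 2) • (1 : Matrix (Fin 4) (Fin 4) ℝ) := by
      intro i
      rw [← Finset.sum_add_distrib]
      have step : ∀ j : Fin 3, (p i * p j) • (A i.succ * A j.succ) +
          (p i * p j) • (A j.succ * A i.succ)
          = (if i = j then 2 * p i ^ 2 else 0) • (1 : Matrix (Fin 4) (Fin 4) ℝ) := by
        intro j
        rw [← smul_add, hanti i j, smul_smul]
        by_cases h : i = j
        · subst h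
          rw [if_pos rfl, if_pos rfl]
          congr 1; ring
        · rw [if_neg h, if_neg h]
          congr 1; ring
      rw [Finset.sum_congr rfl fun j _ => step j]
      simp [ite_smul]
    have key : S * S + S * S
        = (np ^ 2) • (1 : Matrix (Fin 4) (Fin 4) ℝ) + (np ^ 2) • 1 := by
      calc S * S + S * S
          = (∑ i : Fin 3, ∑ j : Fin 3, (p i * p j) • (A i.succ * A j.succ)) +
            ∑ i : Fin 3, ∑ j : Fin 3, (p i * p j) • (A j.succ * A i.succ) := by
            rw [← expand, ← expand2]
        _ = ∑ i : Fin 3, ((∑ j : Fin 3, (p i * p j) • (A i.succ * A j.succ)) +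
            ∑ j : Fin 3, (p i * p j) • (A j.succ * A i.succ)) := by
            rw [Finset.sum_add_distrib]
        _ = ∑ i : Fin 3, (2 * p i ^ 2) • (1 : Matrix (Fin 4) (Fin 4) ℝ) :=
            Finset.sum_congr rfl fun i _ => inner i
        _ = (np ^ 2) • 1 + (np ^ 2) • 1 := by
            rw [← Finset.sum_smul, ← add_smul]
            congr 1
            rw [hnp2, ← Finset.sum_add_distrib]
            exact Finset.sum_congr rfl fun i _ => by ring
    exact half _ _ key
  have hCalt : C = A 0 * S := by rw [hC, hSA0, neg_neg]
  have hCT : Cᵀ = C := by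
    conv_lhs => rw [hC]
    rw [Matrix.transpose_neg, Matrix.transpose_mul, hST, hA0T, neg_mul, neg_neg, hCalt]
  have hCC : C * C = (np ^ 2) • (1 : Matrix (Fin 4) (Fin 4) ℝ) := by
    nth_rewrite 1 [hCalt]
    nth_rewrite 1 [hC]
    rw [mul_neg]
    have h2 : A 0 * S * (S * A 0) = A 0 * (S * S) * A 0 := by noncomm_ring
    rw [h2, hSS]
    simp [mul_smul_comm, smul_mul_assoc, hA0sq]
  -- scalar facts
  have hnp_pos : 0 < np := hnp ▸ Real.sqrt_pos.mpr hsum_sq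
  have hnp_ne : np ≠ 0 := ne_of_gt hnp_pos
  have hEp_pos : 0 < Ep := by
    rw [hEp]
    exact Real.sqrt_pos.mpr (by nlinarith [sq_nonneg m])
  have hEm : m ≤ Ep := by
    rw [hEp]
    calc m = Real.sqrt (m ^ 2) := by rw [Real.sqrt_sq hm]
      _ ≤ _ := Real.sqrt_le_sqrt (by nlinarith [sq_nonneg np])
  have ha2 : a ^ 2 = (Ep + m) / (2 * Ep) := by
    rw [ha, Real.sq_sqrt (div_nonneg (by linarith) (by linarith))]
  have hb2 : b ^ 2 = (Ep - m) / (2 * Ep) := by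
    rw [hb, Real.sq_sqrt (div_nonneg (by linarith) (by linarith))]
  have hab : a ^ 2 + b ^ 2 = 1 := by
    rw [ha2, hb2]; field_simp; ring
  -- assemble
  have hdiag : a • (1 : Matrix (Fin 4) (Fin 4) ℝ) * (a • 1) + ((b / np) • C) * ((b / np) • C)
      = 1 := by
    rw [smul_mul_smul_comm, smul_mul_smul_comm, one_mul, hCC, smul_smul]
    have hbb : b / np * (b / np) * np ^ 2 = b ^ 2 := by field_simp
    have hs : a * a + b / np * (b / np) * np ^ 2 = 1 := by
      rw [hbb]; linear_combination hab
    rw [← add_smul, hs, one_smul]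
  have hoff : a • (1 : Matrix (Fin 4) (Fin 4) ℝ) * ((b / np) • C)
      = ((b / np) • C) * (a • 1) := by
    rw [smul_mul_smul_comm, smul_mul_smul_comm, one_mul, mul_one, mul_comm]
  have hT1 : (a • (1 : Matrix (Fin 4) (Fin 4) ℝ))ᵀ = a • 1 := by
    rw [Matrix.transpose_smul, Matrix.transpose_one]
  have hT2 : (-((b / np) • C))ᵀ = -((b / np) • C) := by
    rw [Matrix.transpose_neg, Matrix.transpose_smul, hCT]
  have hT3 : (((b / np) • C))ᵀ = (b / np) • C := by rw [Matrix.transpose_smul, hCT]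
  have hTR : (a • (1 : Matrix (Fin 4) (Fin 4) ℝ)) * (-((b / np) • C)) +
      ((b / np) • C) * (a • 1) = 0 := by
    rw [mul_neg, hoff]; exact neg_add_cancel _
  have hBL : (-((b / np) • C)) * (a • (1 : Matrix (Fin 4) (Fin 4) ℝ)) +
      (a • 1) * ((b / np) • C) = 0 := by
    rw [neg_mul, ← hoff]; exact neg_add_cancel _
  have hBR : (-((b / np) • C)) * (-((b / np) • C)) +
      (a • (1 : Matrix (Fin 4) (Fin 4) ℝ)) * (a • 1) = 1 := by
    rw [neg_mul_neg, add_comm]; exact hdiag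
  rw [Matrix.fromBlocks_transpose, hT1, hT2, hT3, Matrix.fromBlocks_multiply,
    hdiag, hTR, hBL, hBR, Matrix.fromBlocks_one]
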